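/- Fix R > 0 and t > 0, and let B_t = {(x, y, v_x, v_y) ∈ ℝ⁴ : x² + y² > R², x v_x + y v_y < 0, (x v_x + y v_y)² − (v_x² + v_y²)(x² + y² − R²) > 0, τ < t}, where τ = τ(x, y, v_x, v_y) is the first hitting time of the disk. Then τ is continuously differentiable on B_t with gradient ∇τ = (1/v_⊥)(cos θ, sin θ, τ cos θ, τ sin θ), where cos θ = (x + τ v_x)/R, sin θ = (y + τ v_y)/R and v_⊥ = −(v_x cos θ + v_y sin θ) > 0. Moreover, for any φ, ω ∈ ℝ, the function Φ(x, y, v_x, v_y) = φ + ω τ + (v_t/R)(t − τ), with v_t = (v_x y − v_y x)/R, is continuously differentiable on B_t with gradient ∇Φ = (ω − v_t/R)∇τ + ((t − τ)/R²)(−v_y, v_x, y, −x). -/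

import Mathlib

/-- First hitting time of the disk of radius `R` centered at the origin, as a function of
the particle initial condition `p = (x, y, v_x, v_y)`. -/
noncomputable def hitTime4 (R : ℝ) (p : Fin 4 → ℝ) : ℝ :=
  (-(p 0 * p 2 + p 1 * p 3) -
      Real.sqrt ((p 0 * p 2 + p 1 * p 3) ^ 2 -
        (p 2 ^ 2 + p 3 ^ 2) * (p 0 ^ 2 + p 1 ^ 2 - R ^ 2))) /
    (p 2 ^ 2 + p 3 ^ 2)

/-- The set `B_t` of initial conditions `(x, y, v_x, v_y)` with a transversal first disk
collision before time `t`. -/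
def goodSetF (R t : ℝ) : Set (Fin 4 → ℝ) :=
  {p | R ^ 2 < p 0 ^ 2 + p 1 ^ 2 ∧
       p 0 * p 2 + p 1 * p 3 < 0 ∧
       0 < (p 0 * p 2 + p 1 * p 3) ^ 2 -
            (p 2 ^ 2 + p 3 ^ 2) * (p 0 ^ 2 + p 1 ^ 2 - R ^ 2) ∧
       hitTime4 R p < t}

/-- The lifted angular position of the disk at time `t` after a single collision, for a
disk with initial state `(φ, ω)`: `Φ = φ + ωτ + (v_t/R)(t − τ)` with
`v_t = (v_x y − v_y x)/R`. -/
noncomputable def diskAngle (R t φ ω : ℝ) (p : Fin 4 → ℝ) : ℝ :=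
  φ + ω * hitTime4 R p + ((p 2 * p 1 - p 3 * p 0) / R ^ 2) * (t - hitTime4 R p)

theorem sq_vel_pos (p : Fin 4 → ℝ) (h2 : p 0 * p 2 + p 1 * p 3 < 0) :
    0 < p 2 ^ 2 + p 3 ^ 2 := by
  rcases eq_or_ne (p 2) 0 with h | h
  · rcases eq_or_ne (p 3) 0 with h' | h'
    · simp [h, h'] at h2
    · positivity
  · positivity

theorem hitTime4_mul (R : ℝ) (p : Fin 4 → ℝ) (h2 : p 0 * p 2 + p 1 * p 3 < 0) :
    hitTime4 R p * (p 2 ^ 2 + p 3 ^ 2) =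
      -(p 0 * p 2 + p 1 * p 3) -
        Real.sqrt ((p 0 * p 2 + p 1 * p 3) ^ 2 -
          (p 2 ^ 2 + p 3 ^ 2) * (p 0 ^ 2 + p 1 ^ 2 - R ^ 2)) := by
  have hS := sq_vel_pos p h2
  unfold hitTime4
  field_simp

theorem hitTime4_projs (p : Fin 4 → ℝ) :
    ∀ i : Fin 4, HasFDerivAt (fun q : Fin 4 → ℝ => q i)
      (ContinuousLinearMap.proj i : (Fin 4 → ℝ) →L[ℝ] ℝ) p :=
  fun i => hasFDerivAt_apply (𝕜 := ℝ) i p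

theorem hitTime4_hasFDerivAt (R : ℝ) (p : Fin 4 → ℝ)
    (h2 : p 0 * p 2 + p 1 * p 3 < 0)
    (h3 : 0 < (p 0 * p 2 + p 1 * p 3) ^ 2 -
            (p 2 ^ 2 + p 3 ^ 2) * (p 0 ^ 2 + p 1 ^ 2 - R ^ 2)) :
    ∃ L : (Fin 4 → ℝ) →L[ℝ] ℝ, HasFDerivAt (hitTime4 R) L p ∧
      ∀ v, L v = ((p 0 + hitTime4 R p * p 2) * v 0 + (p 1 + hitTime4 R p * p 3) * v 1 +
          hitTime4 R p * (p 0 + hitTime4 R p * p 2) * v 2 +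
          hitTime4 R p * (p 1 + hitTime4 R p * p 3) * v 3) /
        Real.sqrt ((p 0 * p 2 + p 1 * p 3) ^ 2 -
          (p 2 ^ 2 + p 3 ^ 2) * (p 0 ^ 2 + p 1 ^ 2 - R ^ 2)) := by
  have hS := sq_vel_pos p h2
  set D := (p 0 * p 2 + p 1 * p 3) ^ 2 -
      (p 2 ^ 2 + p 3 ^ 2) * (p 0 ^ 2 + p 1 ^ 2 - R ^ 2) with hD
  have hd : (0:ℝ) < Real.sqrt D := Real.sqrt_pos.mpr h3
  have hd2 : Real.sqrt D ^ 2 = D := Real.sq_sqrt h3.le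
  have hproj := hitTime4_projs p
  have h0 := hproj 0
  have h1 := hproj 1
  have hv2 := hproj 2
  have hv3 := hproj 3
  have hA := (h0.mul hv2).add (h1.mul hv3)
  have hQ := ((h0.mul h0).add (h1.mul h1)).sub_const (R ^ 2)
  have hSf := (hv2.mul hv2).add (hv3.mul hv3)
  have hDf := (hA.mul hA).sub (hSf.mul hQ)
  have h3' : (p 0 * p 2 + p 1 * p 3) * (p 0 * p 2 + p 1 * p 3) -
      (p 2 * p 2 + p 3 * p 3) * (p 0 * p 0 + p 1 * p 1 - R ^ 2) ≠ 0 := by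
    rw [hD] at h3; nlinarith [h3]
  have hsq := hDf.sqrt h3'
  have hS' : p 2 * p 2 + p 3 * p 3 ≠ 0 := by nlinarith [hS]
  have hnum := hA.neg.sub hsq
  have hrep : hitTime4 R = fun q : Fin 4 → ℝ =>
      (-(q 0 * q 2 + q 1 * q 3) -
        Real.sqrt ((q 0 * q 2 + q 1 * q 3) * (q 0 * q 2 + q 1 * q 3) -
          (q 2 * q 2 + q 3 * q 3) * (q 0 * q 0 + q 1 * q 1 - R ^ 2))) *
      (q 2 * q 2 + q 3 * q 3)⁻¹ := by
    funext q
    unfold hitTime4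
    rw [show (q 0 * q 2 + q 1 * q 3) ^ 2 -
        (q 2 ^ 2 + q 3 ^ 2) * (q 0 ^ 2 + q 1 ^ 2 - R ^ 2) =
        (q 0 * q 2 + q 1 * q 3) * (q 0 * q 2 + q 1 * q 3) -
        (q 2 * q 2 + q 3 * q 3) * (q 0 * q 0 + q 1 * q 1 - R ^ 2) from by ring,
      show (q 2 : ℝ) ^ 2 + q 3 ^ 2 = q 2 * q 2 + q 3 * q 3 from by ring, div_eq_mul_inv]
  have hinv := (hasDerivAt_inv hS').comp_hasFDerivAt p hSf
  have hfd : HasFDerivAt (hitTime4 R) _ p := (hnum.mul hinv).congr_of_eventuallyEq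
    (Filter.Eventually.of_forall fun q => (congrFun hrep q).trans rfl)
  refine ⟨_, hfd, fun v => ?_⟩
  have hτ := hitTime4_mul R p h2
  rw [← hD] at hτ
  set τ := hitTime4 R p with hτ_def
  set d := Real.sqrt D with hd_def
  simp only [ContinuousLinearMap.smul_apply, ContinuousLinearMap.add_apply,
    ContinuousLinearMap.sub_apply, ContinuousLinearMap.neg_apply,
    ContinuousLinearMap.mul_apply, ContinuousLinearMap.coe_mul,
    ContinuousLinearMap.proj_apply, smul_eq_mul, Function.comp,
    Pi.mul_apply, Pi.add_apply, Pi.sub_apply, Pi.neg_apply]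
  have harg : (p 0 * p 2 + p 1 * p 3) * (p 0 * p 2 + p 1 * p 3) -
      (p 2 * p 2 + p 3 * p 3) * (p 0 * p 0 + p 1 * p 1 - R ^ 2) = D := by rw [hD]; ring
  rw [harg, ← hd_def]
  have hτ' : τ = (-(p 0 * p 2 + p 1 * p 3) - d) / (p 2 ^ 2 + p 3 ^ 2) := by
    rw [eq_div_iff (ne_of_gt hS)]; exact hτ
  have hd2' : d ^ 2 = (p 0 * p 2 + p 1 * p 3) ^ 2 -
      (p 2 ^ 2 + p 3 ^ 2) * (p 0 ^ 2 + p 1 ^ 2 - R ^ 2) := by rw [hd2, hD]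
  have hd0 : d ≠ 0 := ne_of_gt hd
  have hS0 : (p 2:ℝ) ^ 2 + p 3 ^ 2 ≠ 0 := ne_of_gt hS
  rw [hτ']
  field_simp
  linear_combination (2 * (p 2 * v 2 + p 3 * v 3)) * hd2'

theorem hitTime4_contDiffAt (R : ℝ) (p : Fin 4 → ℝ)
    (h2 : p 0 * p 2 + p 1 * p 3 < 0)
    (h3 : 0 < (p 0 * p 2 + p 1 * p 3) ^ 2 -
            (p 2 ^ 2 + p 3 ^ 2) * (p 0 ^ 2 + p 1 ^ 2 - R ^ 2)) :
    ContDiffAt ℝ 1 (hitTime4 R) p := by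
  have hS := sq_vel_pos p h2
  have hc : ∀ i : Fin 4, ContDiffAt ℝ 1 (fun q : Fin 4 → ℝ => q i) p :=
    fun i => (contDiff_apply ℝ ℝ i).contDiffAt
  have hA := ((hc 0).mul (hc 2)).add ((hc 1).mul (hc 3))
  have hQ := (((hc 0).mul (hc 0)).add ((hc 1).mul (hc 1))).sub (contDiffAt_const (c := R ^ 2))
  have hSf := ((hc 2).mul (hc 2)).add ((hc 3).mul (hc 3))
  have hDf := (hA.mul hA).sub (hSf.mul hQ)
  have h3' : (p 0 * p 2 + p 1 * p 3) * (p 0 * p 2 + p 1 * p 3) -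
      (p 2 * p 2 + p 3 * p 3) * (p 0 * p 0 + p 1 * p 1 - R ^ 2) ≠ 0 := by nlinarith [h3]
  have hS' : p 2 * p 2 + p 3 * p 3 ≠ 0 := by nlinarith [hS]
  have hrep : hitTime4 R = fun q : Fin 4 → ℝ =>
      (-(q 0 * q 2 + q 1 * q 3) -
        Real.sqrt ((q 0 * q 2 + q 1 * q 3) * (q 0 * q 2 + q 1 * q 3) -
          (q 2 * q 2 + q 3 * q 3) * (q 0 * q 0 + q 1 * q 1 - R ^ 2))) /
      (q 2 * q 2 + q 3 * q 3) := by
    funext q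
    unfold hitTime4
    rw [show (q 0 * q 2 + q 1 * q 3) ^ 2 -
        (q 2 ^ 2 + q 3 ^ 2) * (q 0 ^ 2 + q 1 ^ 2 - R ^ 2) =
        (q 0 * q 2 + q 1 * q 3) * (q 0 * q 2 + q 1 * q 3) -
        (q 2 * q 2 + q 3 * q 3) * (q 0 * q 0 + q 1 * q 1 - R ^ 2) from by ring,
      show (q 2 : ℝ) ^ 2 + q 3 ^ 2 = q 2 * q 2 + q 3 * q 3 from by ring]
  rw [hrep]
  exact (hA.neg.sub (hDf.sqrt h3')).div hSf hS'

/-- On `B_t`, the first hitting time `τ` is continuously differentiable with gradient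
`∇τ = (1/v_⊥)(cos θ, sin θ, τ cos θ, τ sin θ)` where `(R cos θ, R sin θ)` is the collision
point and `v_⊥ > 0` is the outward normal velocity component; moreover the lifted angular
position `Φ = φ + ωτ + (v_t/R)(t − τ)` is continuously differentiable with gradient
`∇Φ = (ω − v_t/R)∇τ + ((t − τ)/R²)(−v_y, v_x, y, −x)`. -/
theorem hitTime_diskAngle_contDiffOn (R t : ℝ) (hR : 0 < R) (ht : 0 < t) (φ ω : ℝ) :
    ContDiffOn ℝ 1 (hitTime4 R) (goodSetF R t) ∧
    (∀ p ∈ goodSetF R t,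
      let τ := hitTime4 R p
      let c := (p 0 + τ * p 2) / R
      let s := (p 1 + τ * p 3) / R
      let vperp := -(p 2 * c + p 3 * s)
      0 < vperp ∧
      ∀ v : Fin 4 → ℝ,
        fderiv ℝ (hitTime4 R) p v =
          (1 / vperp) * (c * v 0 + s * v 1 + τ * c * v 2 + τ * s * v 3)) ∧
    ContDiffOn ℝ 1 (diskAngle R t φ ω) (goodSetF R t) ∧
    (∀ p ∈ goodSetF R t,
      let τ := hitTime4 R p
      let vt := (p 2 * p 1 - p 3 * p 0) / R
      ∀ v : Fin 4 → ℝ,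
        fderiv ℝ (diskAngle R t φ ω) p v =
          (ω - vt / R) * fderiv ℝ (hitTime4 R) p v +
            ((t - τ) / R ^ 2) *
              (-(p 3) * v 0 + p 2 * v 1 + p 1 * v 2 + -(p 0) * v 3)) := by
  have hR0 : R ≠ 0 := ne_of_gt hR
  refine ⟨?_, ?_, ?_, ?_⟩
  · exact fun p hp => (hitTime4_contDiffAt R p hp.2.1 hp.2.2.1).contDiffWithinAt
  · rintro p ⟨h1, h2, h3, h4⟩
    obtain ⟨L, hfd, hLv⟩ := hitTime4_hasFDerivAt R p h2 h3
    set D := (p 0 * p 2 + p 1 * p 3) ^ 2 -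
        (p 2 ^ 2 + p 3 ^ 2) * (p 0 ^ 2 + p 1 ^ 2 - R ^ 2) with hD
    have hS := sq_vel_pos p h2
    have hd : (0:ℝ) < Real.sqrt D := Real.sqrt_pos.mpr h3
    have hτ := hitTime4_mul R p h2
    rw [← hD] at hτ
    have hvperp : -(p 2 * ((p 0 + hitTime4 R p * p 2) / R) +
        p 3 * ((p 1 + hitTime4 R p * p 3) / R)) = Real.sqrt D / R := by
      field_simp
      linear_combination -hτ
    refine ⟨?_, ?_⟩
    · show (0:ℝ) < -(p 2 * ((p 0 + hitTime4 R p * p 2) / R) +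
        p 3 * ((p 1 + hitTime4 R p * p 3) / R))
      rw [hvperp]
      positivity
    · intro v
      show fderiv ℝ (hitTime4 R) p v =
        (1 / -(p 2 * ((p 0 + hitTime4 R p * p 2) / R) +
          p 3 * ((p 1 + hitTime4 R p * p 3) / R))) *
        ((p 0 + hitTime4 R p * p 2) / R * v 0 + (p 1 + hitTime4 R p * p 3) / R * v 1 +
          hitTime4 R p * ((p 0 + hitTime4 R p * p 2) / R) * v 2 +
          hitTime4 R p * ((p 1 + hitTime4 R p * p 3) / R) * v 3)
      rw [hfd.fderiv, hLv v, hvperp]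
      field_simp
  · rintro p ⟨h1, h2, h3, h4⟩
    have hcd := hitTime4_contDiffAt R p h2 h3
    have hc : ∀ i : Fin 4, ContDiffAt ℝ 1 (fun q : Fin 4 → ℝ => q i) p :=
      fun i => (contDiff_apply ℝ ℝ i).contDiffAt
    have : ContDiffAt ℝ 1 (diskAngle R t φ ω) p := by
      unfold diskAngle
      exact (contDiffAt_const.add (contDiffAt_const.mul hcd)).add
        (((((hc 2).mul (hc 1)).sub ((hc 3).mul (hc 0))).div_const _).mul
          (contDiffAt_const.sub hcd))
    exact this.contDiffWithinAt
  · rintro p ⟨h1, h2, h3, h4⟩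
    obtain ⟨L, hfd, hLv⟩ := hitTime4_hasFDerivAt R p h2 h3
    intro τ vt v
    have hproj := hitTime4_projs p
    have hg := ((((hproj 2).mul (hproj 1)).sub ((hproj 3).mul (hproj 0))).mul_const ((R:ℝ) ^ 2)⁻¹)
    have hrepΦ : diskAngle R t φ ω = fun q : Fin 4 → ℝ =>
        φ + ω * hitTime4 R q + ((q 2 * q 1 - q 3 * q 0) * ((R:ℝ) ^ 2)⁻¹) * (t - hitTime4 R q) := by
      funext q; unfold diskAngle; rw [div_eq_mul_inv]
    have hΦ : HasFDerivAt (diskAngle R t φ ω) _ p :=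
      ((((hasFDerivAt_const φ p).add ((hasFDerivAt_const ω p).mul hfd)).add
        (hg.mul ((hasFDerivAt_const t p).sub hfd)))).congr_of_eventuallyEq
        (Filter.Eventually.of_forall fun q => (congrFun hrepΦ q).trans rfl)
    rw [hΦ.fderiv, hfd.fderiv]
    simp only [ContinuousLinearMap.smul_apply, ContinuousLinearMap.add_apply,
      ContinuousLinearMap.sub_apply, ContinuousLinearMap.neg_apply,
      ContinuousLinearMap.zero_apply, ContinuousLinearMap.coe_smul',
      ContinuousLinearMap.proj_apply, smul_eq_mul, Pi.smul_apply, mul_zero, zero_mul,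
      add_zero, zero_add, ContinuousLinearMap.coe_zero, Pi.zero_apply,
      Pi.mul_apply, Pi.add_apply, Pi.sub_apply, Pi.neg_apply]
    have hτv : τ = hitTime4 R p := rfl
    have hvt : vt = (p 2 * p 1 - p 3 * p 0) / R := rfl
    rw [hτv, hvt]
    field_simp
    ring
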